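/- Expansion of the hypercube: For all d ≥ 2 and all 0 ≤ k ≤ d − 1, h^k(Q_d) = 1. Equivalently: every k-cochain φ of the hypercube complex Q_d over Z/2 satisfies ‖φ‖_csy ≤ ‖d_kφ‖, and there exists a k-cochain φ with ‖φ‖_csy = ‖d_kφ‖ = 2^{d−k−1} > 0. -/

import Mathlib

open Finset

/-- The `k`-cells of the `d`-dimensional hypercube complex: functions
`{1,…,d} → {0,1,∗}` with exactly `k` coordinates equal to `∗` (= `none`). -/
def qcells (d k : ℕ) : Finset (Fin d → Option Bool) :=
  Finset.univ.filter fun c => (Finset.univ.filter fun i => c i = none).card = k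

/-- The norm of a `k`-cochain of the hypercube complex. -/
def qnorm (d k : ℕ) (φ : (Fin d → Option Bool) → ZMod 2) : ℕ :=
  ((qcells d k).filter fun c => φ c ≠ 0).card

/-- The coboundary of a `k`-cochain of the hypercube complex: the sum of `φ` over the
facets of a `(k+1)`-cell `τ`, i.e. over the `k`-cells obtained from `τ` by replacing one
`∗`-coordinate by `0` or `1`. -/
def qcob (d k : ℕ) (φ : (Fin d → Option Bool) → ZMod 2) :
    (Fin d → Option Bool) → ZMod 2 :=
  fun τ => ∑ σ ∈ (qcells d k).filter
      (fun σ => ∃ i : Fin d, τ i = none ∧ ∃ b : Bool, σ = Function.update τ i (some b)),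
    φ σ

/-- The cosystolic norm of a `k`-cochain of the hypercube complex, with the reduced
convention at `k = 0`. -/
noncomputable def qcosys (d k : ℕ) (φ : (Fin d → Option Bool) → ZMod 2) : ℕ :=
  if k = 0 then
    min (qnorm d 0 φ) (qnorm d 0 fun c => 1 + φ c)
  else
    sInf {m | ∃ ψ : (Fin d → Option Bool) → ZMod 2,
      m = qnorm d k fun τ => φ τ + qcob d (k - 1) ψ τ}

namespace QAux

/-- number of `∗`-coordinates -/
def nn {d : ℕ} (c : Fin d → Option Bool) : ℕ := (univ.filter fun i => c i = none).card

lemma mem_qcells {d k : ℕ} {c : Fin d → Option Bool} : c ∈ qcells d k ↔ nn c = k := by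
  simp [qcells, nn]

lemma nn_cons {d : ℕ} (x : Option Bool) (f : Fin d → Option Bool) :
    nn (Fin.cons x f) = (if x = none then 1 else 0) + nn f := by
  simp only [nn, Finset.card_filter, Fin.sum_univ_succ, Fin.cons_zero, Fin.cons_succ]

lemma cons_some_mem {d k : ℕ} (b : Bool) (f : Fin d → Option Bool) :
    Fin.cons (some b) f ∈ qcells (d+1) k ↔ f ∈ qcells d k := by
  simp [mem_qcells, nn_cons]

lemma cons_none_mem {d k : ℕ} (f : Fin d → Option Bool) :
    Fin.cons none f ∈ qcells (d+1) (k+1) ↔ f ∈ qcells d k := by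
  simp [mem_qcells, nn_cons]; omega

lemma cons_none_not_mem {d : ℕ} (f : Fin d → Option Bool) :
    Fin.cons none f ∉ qcells (d+1) 0 := by
  simp [mem_qcells, nn_cons]

lemma qnorm_congr {d m : ℕ} {f g : (Fin d → Option Bool) → ZMod 2}
    (h : ∀ c ∈ qcells d m, f c = g c) : qnorm d m f = qnorm d m g := by
  unfold qnorm
  apply Finset.card_bij (fun c _ => c)
  · intro a ha; simp only [mem_filter] at ha ⊢; exact ⟨ha.1, by rw [← h a ha.1]; exact ha.2⟩
  · intro a _ b _ hab; exact hab
  · intro a ha; simp only [mem_filter] at ha; exact ⟨a, by simp [mem_filter, ha.1, h a ha.1, ha.2], rfl⟩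

lemma qnorm_eq_zero {d m : ℕ} {f : (Fin d → Option Bool) → ZMod 2}
    (h : ∀ c ∈ qcells d m, f c = 0) : qnorm d m f = 0 := by
  unfold qnorm
  rw [Finset.card_eq_zero, Finset.filter_eq_empty_iff]
  intro c hc
  simp [h c hc]

lemma qnorm_add_le {d m : ℕ} (f g : (Fin d → Option Bool) → ZMod 2) :
    qnorm d m (fun c => f c + g c) ≤ qnorm d m f + qnorm d m g := by
  unfold qnorm
  calc _ ≤ (((qcells d m).filter fun c => f c ≠ 0) ∪ ((qcells d m).filter fun c => g c ≠ 0)).card := by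
        apply Finset.card_le_card
        intro c hc
        simp only [mem_filter, mem_union] at hc ⊢
        rcases hc with ⟨hc1, hc2⟩
        by_cases hf : f c = 0
        · exact Or.inr ⟨hc1, by intro hg; exact hc2 (by rw [hf, hg, add_zero])⟩
        · exact Or.inl ⟨hc1, hf⟩
    _ ≤ _ := Finset.card_union_le _ _

lemma qcob_add {d m : ℕ} (f g : (Fin d → Option Bool) → ZMod 2) (τ : Fin d → Option Bool) :
    qcob d m (fun c => f c + g c) τ = qcob d m f τ + qcob d m g τ := by
  simp [qcob, Finset.sum_add_distrib]

lemma qcob_zero {d m : ℕ} (τ : Fin d → Option Bool) :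
    qcob d m (fun _ => 0) τ = 0 := by simp [qcob]

lemma qnorm_partition {d m : ℕ} (f : (Fin d → Option Bool) → ZMod 2) :
    qnorm d m f + qnorm d m (fun c => 1 + f c) = (qcells d m).card := by
  unfold qnorm
  have : ∀ c : Fin d → Option Bool, (¬ f c ≠ 0) ↔ (1 + f c ≠ 0) := by
    intro c; generalize f c = x; revert x; decide
  rw [← Finset.filter_congr (fun c _ => (this c))]
  exact Finset.card_filter_add_card_filter_not _


def consEq (d : ℕ) : (Option Bool × (Fin d → Option Bool)) ≃ (Fin (d+1) → Option Bool) where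
  toFun p := Fin.cons p.1 p.2
  invFun c := (c 0, Fin.tail c)
  left_inv p := by simp
  right_inv c := by simp [Fin.cons_self_tail]

lemma qnorm_as_sum {d m : ℕ} (φ : (Fin d → Option Bool) → ZMod 2) :
    qnorm d m φ = ∑ c : Fin d → Option Bool, if c ∈ qcells d m ∧ φ c ≠ 0 then 1 else 0 := by
  unfold qnorm
  have : (qcells d m).filter (fun c => φ c ≠ 0)
      = univ.filter (fun c => c ∈ qcells d m ∧ φ c ≠ 0) := by
    ext c; simp
  rw [this, Finset.card_filter]

lemma qnorm_split_succ {d m : ℕ} (φ : (Fin (d+1) → Option Bool) → ZMod 2) :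
    qnorm (d+1) (m+1) φ =
      qnorm d (m+1) (fun f => φ (Fin.cons (some false) f)) +
      qnorm d (m+1) (fun f => φ (Fin.cons (some true) f)) +
      qnorm d m (fun f => φ (Fin.cons none f)) := by
  rw [qnorm_as_sum, ← Fintype.sum_equiv (consEq d)
    (fun p => if Fin.cons p.1 p.2 ∈ qcells (d+1) (m+1) ∧ φ (Fin.cons p.1 p.2) ≠ 0 then 1 else 0)
    (fun c => if c ∈ qcells (d+1) (m+1) ∧ φ c ≠ 0 then 1 else 0)
    (fun p => rfl)]
  rw [Fintype.sum_prod_type, Fintype.sum_option, Fintype.sum_bool]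
  rw [qnorm_as_sum (fun f => φ (Fin.cons (some false) f)),
      qnorm_as_sum (fun f => φ (Fin.cons (some true) f)),
      qnorm_as_sum (fun f => φ (Fin.cons none f))]
  have h1 : ∀ (b : Bool) (f : Fin d → Option Bool),
      (Fin.cons (some b) f ∈ qcells (d+1) (m+1)) = (f ∈ qcells d (m+1)) := by
    intro b f; rw [eq_iff_iff]; exact cons_some_mem b f
  have h2 : ∀ f : Fin d → Option Bool,
      (Fin.cons none f ∈ qcells (d+1) (m+1)) = (f ∈ qcells d m) := by
    intro f; rw [eq_iff_iff]; exact cons_none_mem f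
  simp only [h1, h2]
  ring

lemma qnorm_split_zero {d : ℕ} (φ : (Fin (d+1) → Option Bool) → ZMod 2) :
    qnorm (d+1) 0 φ =
      qnorm d 0 (fun f => φ (Fin.cons (some false) f)) +
      qnorm d 0 (fun f => φ (Fin.cons (some true) f)) := by
  rw [qnorm_as_sum, ← Fintype.sum_equiv (consEq d)
    (fun p => if Fin.cons p.1 p.2 ∈ qcells (d+1) 0 ∧ φ (Fin.cons p.1 p.2) ≠ 0 then 1 else 0)
    (fun c => if c ∈ qcells (d+1) 0 ∧ φ c ≠ 0 then 1 else 0)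
    (fun p => rfl)]
  rw [Fintype.sum_prod_type, Fintype.sum_option, Fintype.sum_bool]
  rw [qnorm_as_sum (fun f => φ (Fin.cons (some false) f)),
      qnorm_as_sum (fun f => φ (Fin.cons (some true) f))]
  have h1 : ∀ (b : Bool) (f : Fin d → Option Bool),
      (Fin.cons (some b) f ∈ qcells (d+1) 0) = (f ∈ qcells d 0) := by
    intro b f; rw [eq_iff_iff]; exact cons_some_mem b f
  have h2 : ∀ f : Fin d → Option Bool,
      ((Fin.cons none f ∈ qcells (d+1) 0 ∧ φ (Fin.cons none f) ≠ 0 : Prop)) = False := by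
    intro f; simp [cons_none_not_mem f]
  simp only [h1, h2]
  simp; ring

lemma update_cons_succ {d : ℕ} (x : Option Bool) (g : Fin d → Option Bool) (j : Fin d)
    (v : Option Bool) :
    Function.update (Fin.cons x g : Fin (d+1) → Option Bool) j.succ v
      = (Fin.cons x (Function.update g j v) : Fin (d+1) → Option Bool) := by
  funext m
  refine Fin.cases ?_ ?_ m
  · simp [Function.update_apply, (Fin.succ_ne_zero j).symm]
  · intro i
    simp only [Function.update_apply, Fin.cons_succ, Fin.succ_inj]

/-- the facet finset appearing in `qcob` -/
def Fcs (d k : ℕ) (τ : Fin d → Option Bool) : Finset (Fin d → Option Bool) :=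
  (qcells d k).filter
      (fun σ => ∃ i : Fin d, τ i = none ∧ ∃ b : Bool, σ = Function.update τ i (some b))

lemma qcob_eq {d k : ℕ} (φ : (Fin d → Option Bool) → ZMod 2) (τ : Fin d → Option Bool) :
    qcob d k φ τ = ∑ σ ∈ Fcs d k τ, φ σ := rfl

lemma L1 {d m : ℕ} (φ : (Fin (d+1) → Option Bool) → ZMod 2) (b : Bool)
    (g : Fin d → Option Bool) :
    qcob (d+1) m φ (Fin.cons (some b) g) = qcob d m (fun f => φ (Fin.cons (some b) f)) g := by
  rw [qcob_eq, qcob_eq]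
  have himg : Fcs (d+1) m (Fin.cons (some b) g) = (Fcs d m g).image (Fin.cons (some b)) := by
    ext σ
    simp only [Fcs, mem_filter, Finset.mem_image]
    constructor
    · rintro ⟨hσ, i, hnone, b', rfl⟩
      revert hσ hnone
      refine Fin.cases ?_ ?_ i
      · intro hnone hσ; simp at hnone
      · intro j hnone hσ
        rw [Fin.cons_succ] at hnone
        rw [update_cons_succ] at hσ ⊢
        exact ⟨Function.update g j (some b'), ⟨(cons_some_mem b _).1 hσ, j, hnone, b', rfl⟩, rfl⟩
    · rintro ⟨h, ⟨hh, j, hnone, b', rfl⟩, rfl⟩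
      exact ⟨(cons_some_mem b _).2 hh, j.succ, by rwa [Fin.cons_succ], b',
        (update_cons_succ _ _ _ _).symm⟩
  rw [himg, Finset.sum_image]
  intro x _ y _ h
  exact Fin.cons_right_injective _ h

lemma update_cons_zero {d : ℕ} (x v : Option Bool) (g : Fin d → Option Bool) :
    Function.update (Fin.cons x g : Fin (d+1) → Option Bool) 0 v
      = (Fin.cons v g : Fin (d+1) → Option Bool) := by
  funext m
  refine Fin.cases ?_ ?_ m
  · simp
  · intro i
    rw [Function.update_apply]
    simp [Fin.succ_ne_zero i]

lemma no_none_of_zero {d : ℕ} {g : Fin d → Option Bool} (hg : g ∈ qcells d 0) :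
    ∀ i, g i ≠ none := by
  intro i hgi
  have h0 := mem_qcells.1 hg
  unfold nn at h0
  rw [Finset.card_eq_zero] at h0
  have : i ∈ (∅ : Finset (Fin d)) := h0 ▸ mem_filter.2 ⟨mem_univ i, hgi⟩
  simp at this

lemma cons_ne_cons {d : ℕ} {x y : Option Bool} {f g : Fin d → Option Bool} (h : x ≠ y) :
    (Fin.cons x f : Fin (d+1) → Option Bool) ≠ Fin.cons y g := by
  intro he
  exact h (by simpa using congrFun he 0)

lemma L2 {d m : ℕ} (φ : (Fin (d+1) → Option Bool) → ZMod 2) {g : Fin d → Option Bool}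
    (hg : g ∈ qcells d m) :
    qcob (d+1) m φ (Fin.cons none g)
      = φ (Fin.cons (some false) g) + φ (Fin.cons (some true) g)
        + qcob d (m-1) (fun f => φ (Fin.cons none f)) g := by
  rcases m with _ | m'
  · have hF : Fcs (d+1) 0 (Fin.cons none g)
        = {Fin.cons (some false) g, Fin.cons (some true) g} := by
      ext σ
      simp only [Fcs, mem_filter, mem_insert, mem_singleton]
      constructor
      · rintro ⟨hσ, i, hnone, b', rfl⟩
        revert hσ hnone
        refine Fin.cases ?_ ?_ i
        · intro _ _; rw [update_cons_zero]; cases b' <;> simp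
        · intro j hnone hσ
          rw [update_cons_succ] at hσ
          exact absurd hσ (cons_none_not_mem _)
      · rintro (rfl | rfl)
        · exact ⟨(cons_some_mem _ g).2 hg, 0, rfl, false, (update_cons_zero _ _ _).symm⟩
        · exact ⟨(cons_some_mem _ g).2 hg, 0, rfl, true, (update_cons_zero _ _ _).symm⟩
    have hF2 : Fcs d (0-1) g = ∅ := by
      rw [Finset.eq_empty_iff_forall_notMem]
      intro σ hσ
      rw [Fcs, mem_filter] at hσ
      obtain ⟨_, i, hnone, _⟩ := hσ
      exact no_none_of_zero hg i hnone
    rw [qcob_eq, qcob_eq, hF, hF2,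
      Finset.sum_pair (cons_ne_cons (by simp))]
    simp
  · have hF : Fcs (d+1) (m'+1) (Fin.cons none g)
        = insert (Fin.cons (some false) g)
            (insert (Fin.cons (some true) g) ((Fcs d m' g).image (Fin.cons none))) := by
      ext σ
      simp only [Fcs, mem_filter, mem_insert, Finset.mem_image]
      constructor
      · rintro ⟨hσ, i, hnone, b', rfl⟩
        revert hσ hnone
        refine Fin.cases ?_ ?_ i
        · intro _ _; rw [update_cons_zero]; cases b' <;> simp
        · intro j hnone hσ
          rw [Fin.cons_succ] at hnone
          rw [update_cons_succ] at hσ ⊢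
          exact Or.inr (Or.inr ⟨Function.update g j (some b'),
            ⟨(cons_none_mem _).1 hσ, j, hnone, b', rfl⟩, rfl⟩)
      · rintro (rfl | rfl | ⟨h, hh, rfl⟩)
        · exact ⟨(cons_some_mem _ g).2 hg, 0, rfl, false, (update_cons_zero _ _ _).symm⟩
        · exact ⟨(cons_some_mem _ g).2 hg, 0, rfl, true, (update_cons_zero _ _ _).symm⟩
        · obtain ⟨hq, j, hnone, b', rfl⟩ := hh
          exact ⟨(cons_none_mem _).2 hq, j.succ, by rwa [Fin.cons_succ], b',
            (update_cons_succ _ _ _ _).symm⟩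
    have hn1 : (Fin.cons (some false) g : Fin (d+1) → Option Bool)
        ∉ insert (Fin.cons (some true) g) ((Fcs d m' g).image (Fin.cons none)) := by
      simp only [mem_insert, Finset.mem_image]
      rintro (h | ⟨h, _, heq⟩)
      · exact cons_ne_cons (by simp) h
      · exact cons_ne_cons (by simp) heq.symm
    have hn2 : (Fin.cons (some true) g : Fin (d+1) → Option Bool)
        ∉ (Fcs d m' g).image (Fin.cons none) := by
      simp only [Finset.mem_image]
      rintro ⟨h, _, heq⟩
      exact cons_ne_cons (by simp) heq.symm
    rw [qcob_eq, hF, Finset.sum_insert hn1, Finset.sum_insert hn2,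
      Finset.sum_image (fun x _ y _ h => Fin.cons_right_injective _ h), qcob_eq]
    norm_num [add_assoc]

lemma zmod2_add_self : ∀ x : ZMod 2, x + x = 0 := by decide

lemma csy_le {d k : ℕ} (hk : k ≠ 0) (φ ψ : (Fin d → Option Bool) → ZMod 2) :
    qcosys d k φ ≤ qnorm d k (fun τ => φ τ + qcob d (k-1) ψ τ) := by
  rw [qcosys, if_neg hk]
  exact Nat.sInf_le ⟨ψ, rfl⟩

lemma csy_mem {d k : ℕ} (hk : k ≠ 0) (φ : (Fin d → Option Bool) → ZMod 2) :
    ∃ ψ, qcosys d k φ = qnorm d k (fun τ => φ τ + qcob d (k-1) ψ τ) := by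
  rw [qcosys, if_neg hk]
  have hne : {m | ∃ ψ, m = qnorm d k fun τ => φ τ + qcob d (k - 1) ψ τ}.Nonempty :=
    ⟨_, ⟨(fun _ => 0), rfl⟩⟩
  exact Nat.sInf_mem hne

/-- top dimension: every `d`-cochain is a coboundary (mod nothing) -/
lemma top_csy (d : ℕ) (hd : 1 ≤ d) (φ : (Fin d → Option Bool) → ZMod 2) :
    ∃ ψ, qnorm d d (fun τ => φ τ + qcob d (d-1) ψ τ) = 0 := by
  set T : Fin d → Option Bool := fun _ => none with hT
  have hTcell : ∀ c ∈ qcells d d, c = T := by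
    intro c hc
    have h1 := mem_qcells.1 hc
    unfold nn at h1
    have h2 : (univ.filter fun i => c i = none) = univ := by
      apply Finset.eq_univ_of_card
      rw [h1, Fintype.card_fin]
    funext i
    have := (Finset.eq_univ_iff_forall.1 h2) i
    exact (mem_filter.1 this).2
  set i0 : Fin d := ⟨0, hd⟩ with hi0
  set σ0 : Fin d → Option Bool := Function.update T i0 (some false) with hσ0
  have hσ0mem : σ0 ∈ qcells d (d-1) := by
    rw [mem_qcells]
    unfold nn
    have : (univ.filter fun i => σ0 i = none) = univ.erase i0 := by
      ext i
      simp only [mem_filter, mem_univ, true_and, mem_erase, and_true]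
      rw [hσ0, Function.update_apply]
      by_cases h : i = i0 <;> simp [h, hT]
    rw [this, Finset.card_erase_of_mem (mem_univ _), Finset.card_univ, Fintype.card_fin]
  refine ⟨fun c => if c = σ0 then φ T else 0, ?_⟩
  apply qnorm_eq_zero
  intro c hc
  rw [hTcell c hc]
  have : qcob d (d-1) (fun c => if c = σ0 then φ T else 0) T = φ T := by
    rw [qcob_eq, Finset.sum_ite_eq' (Fcs d (d-1) T) σ0 (fun _ => φ T), if_pos]
    rw [Fcs, mem_filter]
    exact ⟨hσ0mem, i0, rfl, false, rfl⟩
  rw [this]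
  exact zmod2_add_self _

/-- one-sided bound in the inductive step -/
lemma step_one {d k' : ℕ} (φ : (Fin (d+1) → Option Bool) → ZMod 2)
    (ψ0 : (Fin d → Option Bool) → ZMod 2) (b : Bool) :
    qcosys (d+1) (k'+1) φ ≤
      2 * qnorm d (k'+1) (fun g => φ (Fin.cons (some b) g) + qcob d k' ψ0 g)
      + qnorm d (k'+1) (fun g => φ (Fin.cons (some false) g) + φ (Fin.cons (some true) g)
          + qcob d k' (fun f => φ (Fin.cons none f)) g) := by
  set φn : (Fin d → Option Bool) → ZMod 2 := fun f => φ (Fin.cons none f) with hφn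
  set Ψ : (Fin (d+1) → Option Bool) → ZMod 2 := fun c =>
    if c 0 = some b then ψ0 (Fin.tail c)
    else if c 0 = some (!b) then ψ0 (Fin.tail c) + φn (Fin.tail c) else 0 with hΨ
  have hΨb : ∀ f, Ψ (Fin.cons (some b) f) = ψ0 f := by
    intro f; rw [hΨ]; simp [Fin.tail_cons]
  have hΨnb : ∀ f, Ψ (Fin.cons (some (!b)) f) = ψ0 f + φn f := by
    intro f; rw [hΨ]; cases b <;> simp [Fin.tail_cons]
  have hΨn : ∀ f, Ψ (Fin.cons none f) = 0 := by
    intro f; rw [hΨ]; simp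
  have hXb : qnorm d (k'+1) (fun g => φ (Fin.cons (some b) g)
        + qcob (d+1) k' Ψ (Fin.cons (some b) g))
      = qnorm d (k'+1) (fun g => φ (Fin.cons (some b) g) + qcob d k' ψ0 g) := by
    apply congrArg
    funext g
    rw [L1]
    congr 1
    apply congrArg (fun ρ => qcob d k' ρ g)
    exact funext hΨb
  have hXnb : qnorm d (k'+1) (fun g => φ (Fin.cons (some (!b)) g)
        + qcob (d+1) k' Ψ (Fin.cons (some (!b)) g))
      ≤ qnorm d (k'+1) (fun g => φ (Fin.cons (some false) g) + φ (Fin.cons (some true) g)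
          + qcob d k' φn g)
        + qnorm d (k'+1) (fun g => φ (Fin.cons (some b) g) + qcob d k' ψ0 g) := by
    have heq : (fun g => φ (Fin.cons (some (!b)) g)
          + qcob (d+1) k' Ψ (Fin.cons (some (!b)) g))
        = fun g => (φ (Fin.cons (some false) g) + φ (Fin.cons (some true) g)
            + qcob d k' φn g) + (φ (Fin.cons (some b) g) + qcob d k' ψ0 g) := by
      funext g
      rw [L1]
      have h2 : qcob d k' (fun f => Ψ (Fin.cons (some (!b)) f)) g
          = qcob d k' ψ0 g + qcob d k' φn g := by
        rw [← qcob_add]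
        apply congrArg (fun ρ => qcob d k' ρ g)
        exact funext hΨnb
      rw [h2]
      cases b
      · simp only [Bool.not_false]
        generalize φ (Fin.cons (some false) g) = u
        generalize φ (Fin.cons (some true) g) = v
        generalize qcob d k' ψ0 g = w
        generalize qcob d k' φn g = z
        revert u v w z; decide
      · simp only [Bool.not_true]
        generalize φ (Fin.cons (some false) g) = u
        generalize φ (Fin.cons (some true) g) = v
        generalize qcob d k' ψ0 g = w
        generalize qcob d k' φn g = z
        revert u v w z; decide
    rw [heq]
    exact qnorm_add_le _ _
  have hsum : ∀ f, Ψ (Fin.cons (some false) f) + Ψ (Fin.cons (some true) f) = φn f := by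
    intro f
    cases b
    · simp only [Bool.not_false] at hΨnb
      rw [hΨb f, hΨnb f]
      generalize ψ0 f = u; generalize φn f = v
      revert u v; decide
    · simp only [Bool.not_true] at hΨnb
      rw [hΨb f, hΨnb f]
      generalize ψ0 f = u; generalize φn f = v
      revert u v; decide
  have hXn : qnorm d k' (fun g => φ (Fin.cons none g)
      + qcob (d+1) k' Ψ (Fin.cons none g)) = 0 := by
    apply qnorm_eq_zero
    intro g hg
    have hq0 : qcob d (k'-1) (fun f => Ψ (Fin.cons none f)) g = 0 := by
      have h3 : (fun f => Ψ (Fin.cons none f)) = (fun _ => (0:ZMod 2)) := funext hΨn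
      rw [h3, qcob_zero]
    rw [L2 Ψ hg, hq0, hsum g, add_zero]
    exact zmod2_add_self _
  have key := csy_le (Nat.succ_ne_zero k') φ Ψ
  rw [qnorm_split_succ] at key
  simp only [Nat.succ_sub_one, Nat.succ_eq_add_one] at key
  rw [hXn] at key
  cases b
  · simp only [Bool.not_false] at hXnb
    rw [hXb] at key
    omega
  · simp only [Bool.not_true] at hXnb
    rw [hXb] at key
    omega

lemma fcs_zero_empty {d : ℕ} {g : Fin d → Option Bool} (hg : g ∈ qcells d 0) :
    Fcs d (0-1) g = ∅ := by
  rw [Finset.eq_empty_iff_forall_notMem]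
  intro σ hσ
  obtain ⟨_, i, hnone, _⟩ := mem_filter.1 hσ
  exact no_none_of_zero hg i hnone

theorem csy_le_cob (d : ℕ) : ∀ k ≤ d, ∀ φ : (Fin d → Option Bool) → ZMod 2,
    qcosys d k φ ≤ qnorm d (k+1) (qcob d k φ) := by
  induction d with
  | zero =>
    intro k hk φ
    interval_cases k
    rw [qcosys, if_pos rfl]
    have hpart := qnorm_partition (d := 0) (m := 0) φ
    have h1 : (qcells 0 0).card ≤ 1 := by
      have h2 := Finset.card_le_univ (qcells 0 0)
      rwa [show Fintype.card (Fin 0 → Option Bool) = 1 from by simp] at h2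
    omega
  | succ d ih =>
    intro k hk φ
    cases k with
    | zero =>
      rw [qcosys, if_pos rfl]
      have e1 := qnorm_split_zero φ
      have e2 := qnorm_split_zero (fun c => 1 + φ c)
      have e3 := qnorm_split_succ (m := 0) (qcob (d+1) 0 φ)
      have hf : qnorm d (0+1) (fun g => qcob (d+1) 0 φ (Fin.cons (some false) g))
          = qnorm d 1 (qcob d 0 (fun f => φ (Fin.cons (some false) f))) :=
        congrArg _ (funext fun g => L1 φ false g)
      have ht : qnorm d (0+1) (fun g => qcob (d+1) 0 φ (Fin.cons (some true) g))
          = qnorm d 1 (qcob d 0 (fun f => φ (Fin.cons (some true) f))) :=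
        congrArg _ (funext fun g => L1 φ true g)
      have hn : qnorm d 0 (fun g => qcob (d+1) 0 φ (Fin.cons none g))
          = qnorm d 0 (fun g => φ (Fin.cons (some false) g) + φ (Fin.cons (some true) g)) := by
        apply qnorm_congr
        intro g hg
        rw [L2 φ hg, qcob_eq, fcs_zero_empty hg, Finset.sum_empty, add_zero]
      have bf := ih 0 (Nat.zero_le d) (fun f => φ (Fin.cons (some false) f))
      have bt := ih 0 (Nat.zero_le d) (fun f => φ (Fin.cons (some true) f))
      rw [qcosys, if_pos rfl] at bf bt
      have pf := qnorm_partition (d := d) (m := 0) (fun f => φ (Fin.cons (some false) f))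
      have pt := qnorm_partition (d := d) (m := 0) (fun f => φ (Fin.cons (some true) f))
      have t1 : qnorm d 0 (fun f => φ (Fin.cons (some false) f))
          ≤ qnorm d 0 (fun g => φ (Fin.cons (some false) g) + φ (Fin.cons (some true) g))
            + qnorm d 0 (fun f => φ (Fin.cons (some true) f)) := by
        have h : (fun f => φ (Fin.cons (some false) f))
            = fun g => (φ (Fin.cons (some false) g) + φ (Fin.cons (some true) g))
                + φ (Fin.cons (some true) g) := by
          funext g
          generalize φ (Fin.cons (some false) g) = u
          generalize φ (Fin.cons (some true) g) = v
          revert u v; decide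
        rw [h]; exact qnorm_add_le _ _
      have t2 : qnorm d 0 (fun f => φ (Fin.cons (some true) f))
          ≤ qnorm d 0 (fun g => φ (Fin.cons (some false) g) + φ (Fin.cons (some true) g))
            + qnorm d 0 (fun f => φ (Fin.cons (some false) f)) := by
        have h : (fun f => φ (Fin.cons (some true) f))
            = fun g => (φ (Fin.cons (some false) g) + φ (Fin.cons (some true) g))
                + φ (Fin.cons (some false) g) := by
          funext g
          generalize φ (Fin.cons (some false) g) = u
          generalize φ (Fin.cons (some true) g) = v
          revert u v; decide
        rw [h]; exact qnorm_add_le _ _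
      have t3 : qnorm d 0 (fun f => 1 + φ (Fin.cons (some false) f))
          ≤ qnorm d 0 (fun g => φ (Fin.cons (some false) g) + φ (Fin.cons (some true) g))
            + qnorm d 0 (fun f => 1 + φ (Fin.cons (some true) f)) := by
        have h : (fun f => (1:ZMod 2) + φ (Fin.cons (some false) f))
            = fun g => (φ (Fin.cons (some false) g) + φ (Fin.cons (some true) g))
                + (1 + φ (Fin.cons (some true) g)) := by
          funext g
          generalize φ (Fin.cons (some false) g) = u
          generalize φ (Fin.cons (some true) g) = v
          revert u v; decide
        rw [h]; exact qnorm_add_le _ _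
      have t4 : qnorm d 0 (fun f => 1 + φ (Fin.cons (some true) f))
          ≤ qnorm d 0 (fun g => φ (Fin.cons (some false) g) + φ (Fin.cons (some true) g))
            + qnorm d 0 (fun f => 1 + φ (Fin.cons (some false) f)) := by
        have h : (fun f => (1:ZMod 2) + φ (Fin.cons (some true) f))
            = fun g => (φ (Fin.cons (some false) g) + φ (Fin.cons (some true) g))
                + (1 + φ (Fin.cons (some false) g)) := by
          funext g
          generalize φ (Fin.cons (some false) g) = u
          generalize φ (Fin.cons (some true) g) = v
          revert u v; decide
        rw [h]; exact qnorm_add_le _ _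
      rw [hf, ht, hn] at e3
      simp only [Nat.zero_add] at e1 e2 e3 bf bt hf ht hn ⊢
      omega
    | succ k' =>
      by_cases htop : k'+1 = d+1
      · obtain ⟨ψ, hψ⟩ := top_csy (d+1) (Nat.succ_le_succ (Nat.zero_le d)) φ
        have h1 := csy_le (d := d+1) (k := d+1) (Nat.succ_ne_zero d) φ ψ
        have h2 : qcosys (d+1) (d+1) φ ≤ 0 := h1.trans_eq hψ
        rw [htop]
        exact h2.trans (Nat.zero_le _)
      · have hkd : k'+1 ≤ d := by omega
        obtain ⟨ψf, hψf⟩ := csy_mem (Nat.succ_ne_zero k') (fun f => φ (Fin.cons (some false) f))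
        obtain ⟨ψt, hψt⟩ := csy_mem (Nat.succ_ne_zero k') (fun f => φ (Fin.cons (some true) f))
        have bf := ih (k'+1) hkd (fun f => φ (Fin.cons (some false) f))
        have bt := ih (k'+1) hkd (fun f => φ (Fin.cons (some true) f))
        have s1 := step_one (k' := k') φ ψf false
        have s2 := step_one (k' := k') φ ψt true
        have e3 := qnorm_split_succ (m := k'+1) (qcob (d+1) (k'+1) φ)
        have hf : qnorm d (k'+1+1) (fun g => qcob (d+1) (k'+1) φ (Fin.cons (some false) g))
            = qnorm d (k'+1+1) (qcob d (k'+1) (fun f => φ (Fin.cons (some false) f))) :=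
          congrArg _ (funext fun g => L1 φ false g)
        have ht : qnorm d (k'+1+1) (fun g => qcob (d+1) (k'+1) φ (Fin.cons (some true) g))
            = qnorm d (k'+1+1) (qcob d (k'+1) (fun f => φ (Fin.cons (some true) f))) :=
          congrArg _ (funext fun g => L1 φ true g)
        have hn : qnorm d (k'+1) (fun g => qcob (d+1) (k'+1) φ (Fin.cons none g))
            = qnorm d (k'+1) (fun g => φ (Fin.cons (some false) g) + φ (Fin.cons (some true) g)
                + qcob d k' (fun f => φ (Fin.cons none f)) g) := by
          apply qnorm_congr
          intro g hg
          rw [L2 φ hg]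
          rfl
        simp only [Nat.succ_sub_one, Nat.succ_eq_add_one] at hψf hψt
        rw [hf, ht, hn] at e3
        omega

/-! ### cardinality tools -/

lemma card_pi_pattern {d : ℕ} (t : Fin d → Finset (Option Bool)) :
    (univ.filter fun c : Fin d → Option Bool => ∀ i, c i ∈ t i).card = ∏ i, (t i).card := by
  rw [show (univ.filter fun c : Fin d → Option Bool => ∀ i, c i ∈ t i)
      = Fintype.piFinset t by ext c; simp [Fintype.mem_piFinset]]
  exact Fintype.card_piFinset t

lemma card_pi_pattern_bool {d : ℕ} (t : Fin d → Finset Bool) :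
    (univ.filter fun c : Fin d → Bool => ∀ i, c i ∈ t i).card = ∏ i, (t i).card := by
  rw [show (univ.filter fun c : Fin d → Bool => ∀ i, c i ∈ t i)
      = Fintype.piFinset t by ext c; simp [Fintype.mem_piFinset]]
  exact Fintype.card_piFinset t

lemma prod_ite_two {d : ℕ} (p : Fin d → Prop) [DecidablePred p] :
    (∏ i, (if p i then 1 else 2)) = 2^((univ.filter fun i => ¬ p i).card) := by
  rw [Finset.prod_ite (fun _ => (1:ℕ)) (fun _ => (2:ℕ)), Finset.prod_const,
    Finset.prod_const, one_pow, one_mul]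

lemma card_filter_lt {d m : ℕ} (hm : m ≤ d) :
    (univ.filter fun i : Fin d => (i : ℕ) < m).card = m := by
  rw [Finset.card_filter]
  rw [Fin.sum_univ_eq_sum_range (fun n => if n < m then 1 else 0) d]
  rw [← Finset.card_filter]
  rw [show (Finset.range d).filter (fun n => n < m) = Finset.range m by
    ext x; simp only [Finset.mem_filter, Finset.mem_range]; omega]
  exact Finset.card_range m

lemma notlt_card {d m : ℕ} (hm : m ≤ d) :
    (univ.filter fun i : Fin d => ¬ (i : ℕ) < m).card = d - m := by
  have h1 := Finset.card_filter_add_card_filter_not (s := (univ : Finset (Fin d)))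
    (fun i : Fin d => (i : ℕ) < m)
  rw [card_filter_lt hm, Finset.card_univ, Fintype.card_fin] at h1
  omega

/-! ### the witness cochain -/

def W (d k : ℕ) (hkd : k < d) : (Fin d → Option Bool) → ZMod 2 :=
  fun c => if (∀ i : Fin d, (c i = none ↔ (i : ℕ) < k)) ∧ c ⟨k, hkd⟩ = some false
    then 1 else 0

lemma nones_update {d : ℕ} {τ : Fin d → Option Bool} {j : Fin d} (hj : τ j = none) (b : Bool) :
    (univ.filter fun i => Function.update τ j (some b) i = none)
      = (univ.filter fun i => τ i = none).erase j := by
  ext i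
  simp only [mem_filter, mem_univ, true_and, mem_erase, Function.update_apply]
  by_cases h : i = j
  · simp [h]
  · simp [h]

lemma update_mem_qcells {d k : ℕ} {τ : Fin d → Option Bool} (hτ : τ ∈ qcells d (k+1))
    {j : Fin d} (hj : τ j = none) (b : Bool) :
    Function.update τ j (some b) ∈ qcells d k := by
  rw [mem_qcells] at hτ ⊢
  unfold nn at hτ ⊢
  rw [nones_update hj b,
    Finset.card_erase_of_mem (a := j) (s := univ.filter fun i => τ i = none)
      (mem_filter.2 ⟨mem_univ _, hj⟩), hτ]
  omega

lemma good_mem {d k : ℕ} (hkd : k + 1 ≤ d) {τ : Fin d → Option Bool}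
    (hτ : ∀ i : Fin d, τ i = none ↔ (i : ℕ) < k + 1) : τ ∈ qcells d (k+1) := by
  rw [mem_qcells]
  unfold nn
  rw [show (univ.filter fun i => τ i = none) = univ.filter fun i : Fin d => (i : ℕ) < k + 1 by
    apply Finset.filter_congr; intro i _; simp [hτ i]]
  exact card_filter_lt hkd

lemma dphi_good {d k : ℕ} (hkd : k < d) {τ : Fin d → Option Bool}
    (hτ : ∀ i : Fin d, τ i = none ↔ (i : ℕ) < k + 1) :
    qcob d k (W d k hkd) τ = 1 := by
  set K : Fin d := ⟨k, hkd⟩ with hK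
  have hKval : (K : ℕ) = k := rfl
  have hτK : τ K = none := (hτ K).2 (by omega)
  have hτcell : τ ∈ qcells d (k+1) := good_mem hkd hτ
  have hset : (Fcs d k τ).filter
      (fun σ => (∀ i : Fin d, (σ i = none ↔ (i : ℕ) < k)) ∧ σ K = some false)
      = {Function.update τ K (some false)} := by
    ext σ
    simp only [mem_filter, mem_singleton, Fcs]
    constructor
    · rintro ⟨⟨hσcell, j, hj, b, rfl⟩, hP1, hP2⟩
      have hjK : j = K := by
        by_contra hne
        rw [Function.update_apply, if_neg (fun h : K = j => hne h.symm)] at hP2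
        rw [hP2] at hτK
        exact absurd hτK (by simp)
      subst hjK
      rw [Function.update_self] at hP2
      rw [(Option.some_injective Bool hP2 : b = false)]
    · rintro rfl
      refine ⟨⟨update_mem_qcells hτcell hτK false, K, hτK, false, rfl⟩, ?_, ?_⟩
      · intro i
        rw [Function.update_apply]
        by_cases h : i = K
        · subst h
          simp only [if_pos rfl]
          constructor
          · intro h; simp at h
          · intro h; omega
        · rw [if_neg h]
          rw [hτ i]
          have : (i : ℕ) ≠ k := fun hik => h (Fin.ext hik)
          omega
      · rw [Function.update_self]
  rw [qcob_eq]
  unfold W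
  rw [Finset.sum_boole]
  rw [show (Fcs d k τ).filter (fun σ => (∀ i : Fin d, (σ i = none ↔ (i : ℕ) < k))
      ∧ σ ⟨k, hkd⟩ = some false) = {Function.update τ ⟨k, hkd⟩ (some false)} from hset]
  simp

lemma dphi_bad {d k : ℕ} (hkd : k < d) {τ : Fin d → Option Bool}
    (hτcell : τ ∈ qcells d (k+1))
    (hτ : ¬ ∀ i : Fin d, (τ i = none ↔ (i : ℕ) < k + 1)) :
    qcob d k (W d k hkd) τ = 0 := by
  set K : Fin d := ⟨k, hkd⟩ with hK
  have hKval : (K : ℕ) = k := rfl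
  rw [qcob_eq]
  unfold W
  rw [Finset.sum_boole]
  suffices h : ((Fcs d k τ).filter fun σ =>
      (∀ i : Fin d, (σ i = none ↔ (i : ℕ) < k)) ∧ σ K = some false).card = 0 ∨
      ((Fcs d k τ).filter fun σ =>
      (∀ i : Fin d, (σ i = none ↔ (i : ℕ) < k)) ∧ σ K = some false).card = 2 by
    rcases h with h | h <;> rw [h]
    · simp
    · show ((2:ℕ) : ZMod 2) = 0
      decide
  have hτcard : (univ.filter fun i => τ i = none).card = k + 1 := mem_qcells.1 hτcell
  by_cases hc : (∀ i : Fin d, (i : ℕ) < k → τ i = none) ∧ τ K = some false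
  · right
    obtain ⟨hc1, hc2⟩ := hc
    have hsub : (univ.filter fun i : Fin d => (i : ℕ) < k)
        ⊆ (univ.filter fun i => τ i = none) := by
      intro i hi
      simp only [mem_filter, mem_univ, true_and] at hi ⊢
      exact hc1 i hi
    have hcards : ((univ.filter fun i => τ i = none)
        \ (univ.filter fun i : Fin d => (i : ℕ) < k)).card = 1 := by
      rw [Finset.card_sdiff_of_subset hsub, card_filter_lt (by omega : k ≤ d), hτcard]
      omega
    obtain ⟨j0, hj0⟩ := Finset.card_eq_one.1 hcards
    have hτj0 : τ j0 = none ∧ ¬ (j0 : ℕ) < k := by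
      have h1 : j0 ∈ (univ.filter fun i => τ i = none)
          \ (univ.filter fun i : Fin d => (i : ℕ) < k) := by
        rw [hj0]; exact Finset.mem_singleton_self j0
      simpa only [Finset.mem_sdiff, mem_filter, mem_univ, true_and] using h1
    have hj0K : j0 ≠ K := by
      intro h
      rw [h, hc2] at hτj0
      exact absurd hτj0.1 (by simp)
    have hchar : ∀ i : Fin d, τ i = none ↔ ((i : ℕ) < k ∨ i = j0) := by
      intro i
      constructor
      · intro hi
        by_cases h : (i : ℕ) < k
        · exact Or.inl h
        · right
          have h1 : i ∈ (univ.filter fun i => τ i = none)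
              \ (univ.filter fun i : Fin d => (i : ℕ) < k) := by
            simp only [Finset.mem_sdiff, mem_filter, mem_univ, true_and]
            exact ⟨hi, h⟩
          rw [hj0] at h1
          exact Finset.mem_singleton.1 h1
      · rintro (h | rfl)
        · exact hc1 i h
        · exact hτj0.1
    have hgen : ∀ b : Bool, (Function.update τ j0 (some b) ∈ qcells d k
        ∧ ∃ i, τ i = none ∧ ∃ b', Function.update τ j0 (some b) = Function.update τ i (some b'))
        ∧ (∀ i : Fin d, (Function.update τ j0 (some b) i = none ↔ (i : ℕ) < k))
        ∧ Function.update τ j0 (some b) K = some false := by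
      intro b
      refine ⟨⟨update_mem_qcells hτcell hτj0.1 b, j0, hτj0.1, b, rfl⟩, ?_, ?_⟩
      · intro i
        rw [Function.update_apply]
        by_cases h : i = j0
        · subst h
          simp only [if_pos rfl]
          exact ⟨fun hcon => by simp at hcon, fun hik => absurd hik hτj0.2⟩
        · rw [if_neg h, hchar i]
          constructor
          · rintro (h1 | h2)
            · exact h1
            · exact absurd h2 h
          · exact fun h1 => Or.inl h1
      · rw [Function.update_apply, if_neg (fun h : K = j0 => hj0K h.symm)]
        exact hc2
    have hpair : (Fcs d k τ).filter (fun σ =>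
        (∀ i : Fin d, (σ i = none ↔ (i : ℕ) < k)) ∧ σ K = some false)
        = {Function.update τ j0 (some false), Function.update τ j0 (some true)} := by
      ext σ
      simp only [Fcs, mem_filter, mem_insert, mem_singleton]
      constructor
      · rintro ⟨⟨hσcell, j, hj, b, rfl⟩, hP1, hP2⟩
        have hjj0 : j = j0 := by
          rcases (hchar j).1 hj with h | h
          · have h2 := (hP1 j).2 h
            rw [Function.update_self] at h2
            exact absurd h2 (fun hcon => by simp at hcon)
          · exact h
        subst hjj0
        cases b
        · left; rfl
        · right; rfl
      · rintro (rfl | rfl)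
        · exact ⟨(hgen false).1, (hgen false).2.1, (hgen false).2.2⟩
        · exact ⟨(hgen true).1, (hgen true).2.1, (hgen true).2.2⟩
    rw [hpair, Finset.card_insert_of_notMem, Finset.card_singleton]
    intro hmem
    have h2 := congrFun (Finset.mem_singleton.1 hmem) j0
    rw [Function.update_self, Function.update_self] at h2
    exact Bool.noConfusion (Option.some_injective Bool h2)
  · left
    rw [Finset.card_eq_zero, Finset.filter_eq_empty_iff]
    intro σ hσF
    obtain ⟨hσcell, j, hj, b, rfl⟩ := mem_filter.1 hσF
    rintro ⟨hP1, hP2⟩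
    have hc1 : ∀ i : Fin d, (i : ℕ) < k → τ i = none := by
      intro i hik
      by_cases h : i = j
      · rw [h]; exact hj
      · have h2 := (hP1 i).2 hik
        rw [Function.update_apply, if_neg h] at h2
        exact h2
    by_cases hjK : j = K
    · apply hτ
      intro i
      constructor
      · intro hi
        by_cases h : i = j
        · have : (i : ℕ) = k := by rw [h, hjK, hKval]
          omega
        · have h2 : Function.update τ j (some b) i = none := by
            rw [Function.update_apply, if_neg h]; exact hi
          have h3 := (hP1 i).1 h2
          omega
      · intro hi
        by_cases h : (i : ℕ) < k
        · exact hc1 i h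
        · have h4 : i = K := Fin.ext (by omega)
          rw [h4, ← hjK]
          exact hj
    · apply hc
      refine ⟨hc1, ?_⟩
      rw [← hP2, Function.update_apply, if_neg (fun h : K = j => hjK h.symm)]

lemma norm_dphi {d k : ℕ} (hkd : k < d) :
    qnorm d (k+1) (qcob d k (W d k hkd)) = 2^(d - k - 1) := by
  unfold qnorm
  have hset : (qcells d (k+1)).filter (fun τ => qcob d k (W d k hkd) τ ≠ 0)
      = univ.filter (fun τ => ∀ i : Fin d, τ i = none ↔ (i : ℕ) < k+1) := by
    ext τ
    simp only [mem_filter, mem_univ, true_and]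
    constructor
    · rintro ⟨hcell, hne⟩
      by_contra hbad
      exact hne (dphi_bad hkd hcell hbad)
    · intro hgood
      exact ⟨good_mem hkd hgood, by rw [dphi_good hkd hgood]; exact one_ne_zero⟩
  rw [hset]
  rw [show (univ.filter fun τ : Fin d → Option Bool => ∀ i, τ i = none ↔ (i : ℕ) < k+1)
      = univ.filter (fun τ : Fin d → Option Bool => ∀ i : Fin d, τ i ∈
        (if (i : ℕ) < k + 1 then ({none} : Finset (Option Bool))
          else {some false, some true})) by
    ext τ
    simp only [mem_filter, mem_univ, true_and]
    apply forall_congr'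
    intro i
    by_cases h : (i : ℕ) < k+1
    · simp [h]
    · rcases hτi : τ i with _ | _ | _ <;> simp [h, hτi]]
  rw [card_pi_pattern]
  rw [Finset.prod_congr rfl (fun (i : Fin d) _ => show ((if (i : ℕ) < k + 1
      then ({none} : Finset (Option Bool)) else {some false, some true})).card
      = if (i : ℕ) < k + 1 then 1 else 2 from by by_cases h : (i : ℕ) < k+1 <;> simp [h])]
  rw [prod_ite_two, notlt_card (by omega : k + 1 ≤ d)]
  congr 1

lemma card_filter_ltK {d k : ℕ} (hkd : k < d) :
    (univ.filter fun i : Fin d => ¬((i : ℕ) < k ∨ i = ⟨k, hkd⟩)).card = d - (k+1) := by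
  have h1 : (univ.filter fun i : Fin d => ((i : ℕ) < k ∨ i = ⟨k, hkd⟩))
      = insert ⟨k, hkd⟩ (univ.filter fun i : Fin d => (i : ℕ) < k) := by
    ext i
    simp only [mem_filter, mem_univ, true_and, mem_insert]
    tauto
  have h2 : (univ.filter fun i : Fin d => ((i : ℕ) < k ∨ i = ⟨k, hkd⟩)).card = k + 1 := by
    rw [h1, Finset.card_insert_of_notMem (by simp), card_filter_lt (by omega : k ≤ d)]
  have h3 := Finset.card_filter_add_card_filter_not
    (s := (univ : Finset (Fin d))) (fun i : Fin d => ((i : ℕ) < k ∨ i = ⟨k, hkd⟩))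
  rw [h2, Finset.card_univ, Fintype.card_fin] at h3
  omega

lemma norm_W {d k : ℕ} (hkd : k < d) :
    qnorm d k (W d k hkd) = 2^(d - k - 1) := by
  unfold qnorm
  have hset : (qcells d k).filter (fun c => W d k hkd c ≠ 0)
      = univ.filter (fun c => (∀ i : Fin d, (c i = none ↔ (i : ℕ) < k))
          ∧ c ⟨k, hkd⟩ = some false) := by
    ext c
    simp only [mem_filter, mem_univ, true_and]
    constructor
    · rintro ⟨hcell, hne⟩
      by_contra hbad
      apply hne
      unfold W
      rw [if_neg hbad]
    · intro hcond
      refine ⟨?_, ?_⟩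
      · rw [mem_qcells]
        unfold nn
        rw [show (univ.filter fun i => c i = none)
            = univ.filter fun i : Fin d => (i : ℕ) < k by
          apply Finset.filter_congr; intro i _; simp [hcond.1 i]]
        exact card_filter_lt (le_of_lt hkd)
      · unfold W
        rw [if_pos hcond]
        exact one_ne_zero
  rw [hset]
  rw [show (univ.filter (fun c : Fin d → Option Bool =>
        (∀ i : Fin d, (c i = none ↔ (i : ℕ) < k)) ∧ c ⟨k, hkd⟩ = some false))
      = univ.filter (fun c : Fin d → Option Bool => ∀ i : Fin d, c i ∈
        (if (i : ℕ) < k then ({none} : Finset (Option Bool))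
          else if i = ⟨k, hkd⟩ then {some false} else {some false, some true})) by
    ext c
    simp only [mem_filter, mem_univ, true_and]
    constructor
    · rintro ⟨h1, h2⟩ i
      by_cases h : (i : ℕ) < k
      · simp [h, (h1 i).2 h]
      · rw [if_neg h]
        by_cases hiK : i = ⟨k, hkd⟩
        · rw [if_pos hiK, hiK]
          simp [h2]
        · rw [if_neg hiK]
          have h3 : c i ≠ none := fun hcon => h ((h1 i).1 hcon)
          rcases hci : c i with _ | _ | _
          · exact absurd hci h3
          · simp
          · simp
    · intro hall
      have h1 : ∀ i : Fin d, (c i = none ↔ (i : ℕ) < k) := by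
        intro i
        have h2 := hall i
        by_cases h : (i : ℕ) < k
        · rw [if_pos h] at h2
          simp only [mem_singleton] at h2
          simp [h2, h]
        · rw [if_neg h] at h2
          by_cases hiK : i = ⟨k, hkd⟩
          · rw [if_pos hiK] at h2
            simp only [mem_singleton] at h2
            simp [h2, h]
          · rw [if_neg hiK] at h2
            simp only [mem_insert, mem_singleton] at h2
            rcases h2 with h2 | h2 <;> simp [h2, h]
      refine ⟨h1, ?_⟩
      have h2 := hall ⟨k, hkd⟩
      rw [if_neg (by simp), if_pos rfl] at h2
      simpa using h2]
  rw [card_pi_pattern]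
  rw [Finset.prod_congr rfl (fun (i : Fin d) _ => show ((if (i : ℕ) < k
      then ({none} : Finset (Option Bool))
      else if i = ⟨k, hkd⟩ then {some false} else {some false, some true})).card
      = if ((i : ℕ) < k ∨ i = ⟨k, hkd⟩) then 1 else 2 from by
    by_cases h : (i : ℕ) < k
    · simp [h]
    · by_cases hiK : i = ⟨k, hkd⟩ <;> simp [h, hiK])]
  rw [prod_ite_two, card_filter_ltK hkd]
  congr 1

lemma card_qcells_zero {d : ℕ} : (qcells d 0).card = 2^d := by
  rw [show qcells d 0 = univ.filter (fun c : Fin d → Option Bool => ∀ i : Fin d, c i ∈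
      ({some false, some true} : Finset (Option Bool))) by
    ext c
    simp only [mem_filter, mem_univ, true_and]
    constructor
    · intro hc i
      rcases hci : c i with _ | _ | _
      · exact absurd hci (no_none_of_zero hc i)
      · simp
      · simp
    · intro hall
      rw [mem_qcells]
      unfold nn
      rw [Finset.card_eq_zero, Finset.filter_eq_empty_iff]
      intro i _
      have h2 := hall i
      simp only [mem_insert, mem_singleton] at h2
      rcases h2 with h2 | h2 <;> simp [h2]]
  rw [card_pi_pattern]
  rw [Finset.prod_congr rfl (fun (i : Fin d) _ => show (({some false, some true} :
      Finset (Option Bool))).card = 2 from by simp)]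
  rw [Finset.prod_const, Finset.card_univ, Fintype.card_fin]

lemma gform {d : ℕ} {τ σ ρ : Fin d → Option Bool} {i j : Fin d} {bi bj : Bool}
    (hij : i ≠ j) (hτi : τ i = none) (hτj : τ j = none)
    (hσ : σ = Function.update τ i (some bi)) (hρ : ρ = Function.update σ j (some bj)) :
    (fun m => if τ m = none ∧ σ m ≠ none then none else ρ m)
      = Function.update τ j (some bj) := by
  have hσm : ∀ m, m ≠ i → σ m = τ m := fun m hm => by
    rw [hσ, Function.update_apply, if_neg hm]
  have hρm : ∀ m, m ≠ j → ρ m = σ m := fun m hm => by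
    rw [hρ, Function.update_apply, if_neg hm]
  funext m
  by_cases hmi : m = i
  · subst hmi
    rw [if_pos ⟨hτi, by rw [hσ, Function.update_self]; simp⟩,
      Function.update_apply, if_neg hij, hτi]
  · by_cases hmj : m = j
    · subst hmj
      rw [if_neg (fun hand => hand.2 (by rw [hσm m hmi]; exact hτj)),
        hρ, Function.update_self, Function.update_self]
    · rw [if_neg (fun hand => hand.2 (by rw [hσm m hmi]; exact hand.1)),
        hρm m hmj, hσm m hmi, Function.update_apply, if_neg hmj]

lemma dd_zero {d k m : ℕ} (ψ : (Fin d → Option Bool) → ZMod 2) {τ : Fin d → Option Bool}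
    (hτ : τ ∈ qcells d (k+1)) :
    qcob d k (fun σ => qcob d m ψ σ) τ = 0 := by
  have e : qcob d k (fun σ => qcob d m ψ σ) τ
      = ∑ p ∈ (Fcs d k τ).sigma (fun σ => Fcs d m σ), ψ p.2 :=
    Finset.sum_sigma' (Fcs d k τ) (fun σ => Fcs d m σ) (fun _ ρ => ψ ρ)
  rw [e]
  have struct : ∀ (σ ρ : Fin d → Option Bool), σ ∈ Fcs d k τ → ρ ∈ Fcs d m σ →
      ((fun m' => if τ m' = none ∧ σ m' ≠ none then none else ρ m') ∈ Fcs d k τ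
      ∧ ρ ∈ Fcs d m (fun m' => if τ m' = none ∧ σ m' ≠ none then none else ρ m')
      ∧ (fun m' => if τ m' = none ∧ σ m' ≠ none then none else ρ m') ≠ σ
      ∧ (fun m' => if τ m' = none ∧
          ((fun m'' => if τ m'' = none ∧ σ m'' ≠ none then none else ρ m'') m') ≠ none
          then none else ρ m') = σ) := by
    intro σ ρ h1 h2
    obtain ⟨hσcell, i, hτi, bi, hσ⟩ := mem_filter.1 h1
    obtain ⟨hρcell, j, hσj, bj, hρ⟩ := mem_filter.1 h2
    have hij : i ≠ j := by
      intro h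
      rw [hσ, ← h, Function.update_self] at hσj
      exact absurd hσj (by simp)
    have hτj : τ j = none := by
      have := hσj
      rw [hσ, Function.update_apply, if_neg (fun h : j = i => hij h.symm)] at this
      exact this
    have e1 : (fun m' => if τ m' = none ∧ σ m' ≠ none then none else ρ m')
        = Function.update τ j (some bj) := gform hij hτi hτj hσ hρ
    have hρ' : ρ = Function.update (Function.update τ j (some bj)) i (some bi) := by
      rw [hρ, hσ, Function.update_comm hij]
    have e2 : (fun m' => if τ m' = none ∧ Function.update τ j (some bj) m' ≠ none
        then none else ρ m') = Function.update τ i (some bi) :=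
      gform (fun h => hij h.symm) hτj hτi rfl hρ'
    refine ⟨?_, ?_, ?_, ?_⟩
    · rw [e1]
      exact mem_filter.2 ⟨update_mem_qcells hτ hτj bj, j, hτj, bj, rfl⟩
    · rw [e1]
      refine mem_filter.2 ⟨hρcell, i, ?_, bi, hρ'⟩
      rw [Function.update_apply, if_neg hij, hτi]
    · rw [e1]
      intro hcon
      have h3 := congrFun hcon j
      rw [Function.update_self, hσ, Function.update_apply,
        if_neg (fun h : j = i => hij h.symm), hτj] at h3
      exact absurd h3 (by simp)
    · funext m'
      have h4 := congrFun e1 m'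
      have h5 := congrFun e2 m'
      rw [show ((fun m'' => if τ m'' = none ∧ σ m'' ≠ none then none else ρ m'') m')
          = (if τ m' = none ∧ σ m' ≠ none then none else ρ m') from rfl]
      rw [h4, h5, hσ]
  refine Finset.sum_involution
    (fun p _ => ⟨fun m' => if τ m' = none ∧ p.1 m' ≠ none then none else p.2 m', p.2⟩)
    (fun p _ => zmod2_add_self _) ?_ ?_ ?_
  · rintro ⟨σ, ρ⟩ hp _
    obtain ⟨h1, h2⟩ := Finset.mem_sigma.1 hp
    intro hcon
    exact (struct σ ρ h1 h2).2.2.1 (congrArg Sigma.fst hcon)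
  · rintro ⟨σ, ρ⟩ hp
    obtain ⟨h1, h2⟩ := Finset.mem_sigma.1 hp
    exact Finset.mem_sigma.2 ⟨(struct σ ρ h1 h2).1, (struct σ ρ h1 h2).2.1⟩
  · rintro ⟨σ, ρ⟩ hp
    obtain ⟨h1, h2⟩ := Finset.mem_sigma.1 hp
    have h4 := (struct σ ρ h1 h2).2.2.2
    exact congrArg (fun x => (⟨x, ρ⟩ : (_ : Fin d → Option Bool) × (Fin d → Option Bool))) h4

lemma card_boolpattern {d k : ℕ} (hkd : k < d) :
    (univ.filter (fun a : Fin d → Bool => ∀ i : Fin d, (i : ℕ) < k + 1 → a i = false)).card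
      = 2^(d - k - 1) := by
  rw [show (univ.filter (fun a : Fin d → Bool => ∀ i : Fin d, (i : ℕ) < k + 1 → a i = false))
      = univ.filter (fun a : Fin d → Bool => ∀ i : Fin d, a i ∈
        (if (i : ℕ) < k + 1 then ({false} : Finset Bool) else univ)) by
    ext a
    simp only [mem_filter, mem_univ, true_and]
    apply forall_congr'
    intro i
    by_cases h : (i : ℕ) < k + 1 <;> simp [h]]
  rw [card_pi_pattern_bool]
  rw [Finset.prod_congr rfl (fun (i : Fin d) _ => show ((if (i : ℕ) < k + 1
      then ({false} : Finset Bool) else univ)).card = if (i : ℕ) < k + 1 then 1 else 2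
      from by by_cases h : (i : ℕ) < k + 1 <;> simp [h])]
  rw [prod_ite_two, notlt_card (by omega : k + 1 ≤ d)]
  congr 1

lemma csy_lower {d k : ℕ} (hkd : k < d) (ψ : (Fin d → Option Bool) → ZMod 2) :
    2^(d - k - 1) ≤ qnorm d k (fun τ => W d k hkd τ + qcob d (k-1) ψ τ) := by
  set χ : (Fin d → Option Bool) → ZMod 2 :=
    fun τ => W d k hkd τ + qcob d (k-1) ψ τ with hχ
  set T : (Fin d → Bool) → (Fin d → Option Bool) :=
    fun a i => if (i : ℕ) < k + 1 then none else some (a i) with hT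
  have hTgood : ∀ a, ∀ i : Fin d, T a i = none ↔ (i : ℕ) < k + 1 := by
    intro a i
    rw [hT]
    by_cases h : (i : ℕ) < k + 1 <;> simp [h]
  have hTval : ∀ (a : Fin d → Bool) (i : Fin d), ¬ (i : ℕ) < k + 1 → T a i = some (a i) := by
    intro a i h
    rw [hT]
    simp [h]
  have hTcell : ∀ a, T a ∈ qcells d (k+1) := fun a => good_mem hkd (hTgood a)
  have hkey : ∀ a, ∃ σ ∈ Fcs d k (T a), χ σ ≠ 0 := by
    intro a
    by_contra hno
    push_neg at hno
    have h0 : ∑ σ ∈ Fcs d k (T a), χ σ = 0 := Finset.sum_eq_zero hno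
    have hsplit : (∑ σ ∈ Fcs d k (T a), χ σ)
        = qcob d k (W d k hkd) (T a) + qcob d k (fun σ => qcob d (k-1) ψ σ) (T a) := by
      rw [qcob_eq, qcob_eq, ← Finset.sum_add_distrib]
    rw [hsplit, dphi_good hkd (hTgood a), dd_zero ψ (hTcell a), add_zero] at h0
    exact one_ne_zero h0
  choose σf hσf1 hσf2 using hkey
  have hinj : Set.InjOn σf
      ↑(univ.filter (fun a : Fin d → Bool => ∀ i : Fin d, (i : ℕ) < k + 1 → a i = false)) := by
    intro a ha a' ha' heq
    simp only [Finset.coe_filter, Set.mem_setOf_eq, mem_univ, true_and] at ha ha'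
    have e : ∀ b : Fin d → Bool, ∀ i : Fin d, ¬ (i : ℕ) < k + 1 → σf b i = some (b i) := by
      intro b i h
      obtain ⟨_, j, hj, bb, hupd⟩ := mem_filter.1 (hσf1 b)
      rw [hupd, Function.update_apply,
        if_neg (fun hij : i = j => h (by rw [hij]; exact (hTgood b j).1 hj))]
      exact hTval b i h
    funext i
    by_cases h : (i : ℕ) < k + 1
    · rw [ha i h, ha' i h]
    · have h1 := e a i h
      have h2 := e a' i h
      rw [heq] at h1
      exact Option.some_injective Bool (h1.symm.trans h2)
  have hsub : ∀ a ∈ univ.filter (fun a : Fin d → Bool =>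
      ∀ i : Fin d, (i : ℕ) < k + 1 → a i = false),
      σf a ∈ (qcells d k).filter (fun c => χ c ≠ 0) := by
    intro a _
    exact mem_filter.2 ⟨(mem_filter.1 (hσf1 a)).1, hσf2 a⟩
  have hcard := Finset.card_le_card_of_injOn σf hsub hinj
  rw [card_boolpattern hkd] at hcard
  exact hcard
end QAux

/-- **Expansion of the hypercube**: `h^k(Q_d) = 1` for all `d ≥ 2` and `0 ≤ k ≤ d - 1`:
every `k`-cochain `φ` of `Q_d` satisfies `‖φ‖_csy ≤ ‖d_k φ‖`, and there is a `k`-cochain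
with `‖φ‖_csy = ‖d_k φ‖ = 2^{d-k-1} > 0`. -/
theorem hypercube_expansion (d k : ℕ) (hd : 2 ≤ d) (hk : k ≤ d - 1) :
    (∀ φ : (Fin d → Option Bool) → ZMod 2,
        qcosys d k φ ≤ qnorm d (k + 1) (qcob d k φ)) ∧
      ∃ φ : (Fin d → Option Bool) → ZMod 2,
        qcosys d k φ = qnorm d (k + 1) (qcob d k φ) ∧
          qcosys d k φ = 2 ^ (d - k - 1) := by
  have hkd : k < d := by omega
  refine ⟨fun φ => QAux.csy_le_cob d k (by omega) φ, ?_⟩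
  have hnorm : qnorm d (k+1) (qcob d k (QAux.W d k hkd)) = 2^(d-k-1) := QAux.norm_dphi hkd
  have hupper : qcosys d k (QAux.W d k hkd) ≤ 2^(d-k-1) :=
    (QAux.csy_le_cob d k (by omega) _).trans_eq hnorm
  have hlower : 2^(d-k-1) ≤ qcosys d k (QAux.W d k hkd) := by
    rcases Nat.eq_zero_or_pos k with rfl | hkpos
    · rw [qcosys, if_pos rfl]
      have h1 : qnorm d 0 (QAux.W d 0 hkd) = 2^(d-0-1) := QAux.norm_W hkd
      have h2 := QAux.qnorm_partition (d := d) (m := 0) (QAux.W d 0 hkd)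
      rw [QAux.card_qcells_zero] at h2
      have hd1 : d - 1 + 1 = d := by omega
      have h4 : (2:ℕ)^(d-1) * 2 = 2^d := by
        have h5 := (pow_succ 2 (d-1)).symm
        rwa [hd1] at h5
      simp only [Nat.sub_zero] at h1 ⊢
      omega
    · rw [qcosys, if_neg (by omega)]
      have hne : {m | ∃ ψ : (Fin d → Option Bool) → ZMod 2,
          m = qnorm d k fun τ => QAux.W d k hkd τ + qcob d (k - 1) ψ τ}.Nonempty :=
        ⟨_, ⟨(fun _ => 0), rfl⟩⟩
      apply le_csInf hne
      rintro m ⟨ψ, rfl⟩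
      exact QAux.csy_lower hkd ψ
  have heq : qcosys d k (QAux.W d k hkd) = 2^(d-k-1) := le_antisymm hupper hlower
  exact ⟨QAux.W d k hkd, by rw [heq, hnorm], heq⟩
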